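/- If a play satisfies DirBWMP(0) then it satisfies the total-payoff objective TP(0): let w : ℕ → ℝ and suppose there exists an integer ℓ ≥ 1 such that for every i ∈ ℕ there exists d with 1 ≤ d ≤ ℓ and S(i,i+d) ≥ 0. Then there are infinitely many n ∈ ℕ with S(0,n) ≥ 0; in particular limsup_{n→∞} S(0,n) ≥ 0. -/

import Mathlib

open scoped Classical

/-- `infixSum w i j = S(i,j) = Σ_{t=i}^{j-1} w t`, the total payoff of the
infix `(i, j)` of the payoff sequence `w`. -/
def infixSum (w : ℕ → ℝ) (i j : ℕ) : ℝ :=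
  ∑ t ∈ Finset.Ico i j, w t

/-- If a payoff sequence satisfies `DirBWMP(0)` then it satisfies the
total-payoff objective `TP(0)`: there are infinitely many `n` with
`S(0,n) ≥ 0`, and in particular `limsup_{n→∞} S(0,n) ≥ 0`. -/
theorem dirbwmp_implies_total_payoff (w : ℕ → ℝ)
    (h : ∃ ℓ : ℕ, 1 ≤ ℓ ∧ ∀ i : ℕ, ∃ d : ℕ, 1 ≤ d ∧ d ≤ ℓ ∧ 0 ≤ infixSum w i (i + d)) :
    (∀ N : ℕ, ∃ n : ℕ, N ≤ n ∧ 0 ≤ infixSum w 0 n) ∧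
    0 ≤ Filter.limsup (fun n : ℕ => infixSum w 0 n) Filter.atTop := by
  obtain ⟨ℓ, hℓ, h⟩ := h
  choose d hd1 hd2 hd3 using h
  set g : ℕ → ℕ := fun i => i + d i with hg
  set a : ℕ → ℕ := fun k => g^[k] 0 with haDef
  have hstep : ∀ k, a (k + 1) = a k + d (a k) := by
    intro k
    simp only [haDef, Function.iterate_succ_apply' g k 0, hg]
    exact Function.iterate_succ_apply' _ k 0
  have ha : ∀ k, 0 ≤ infixSum w 0 (a k) ∧ k ≤ a k := by
    intro k; induction k with
    | zero => simp [haDef, infixSum]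
    | succ k ih =>
      refine ⟨?_, ?_⟩
      · rw [hstep k]
        have hsplit : infixSum w 0 (a k) + infixSum w (a k) (a k + d (a k))
            = infixSum w 0 (a k + d (a k)) :=
          Finset.sum_Ico_consecutive _ (Nat.zero_le _) (Nat.le_add_right _ _)
        rw [← hsplit]
        exact add_nonneg ih.1 (hd3 (a k))
      · have := hd1 (a k); have := ih.2; rw [hstep k]; omega
  have hmain : ∀ N : ℕ, ∃ n : ℕ, N ≤ n ∧ 0 ≤ infixSum w 0 n := fun N =>
    ⟨a N, (ha N).2, (ha N).1⟩
  refine ⟨hmain, ?_⟩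
  rw [Filter.limsup_eq]
  apply Real.sInf_nonneg
  intro x hx
  simp only [Set.mem_setOf_eq, Filter.eventually_atTop] at hx
  obtain ⟨N, hN⟩ := hx
  obtain ⟨n, hn, hn0⟩ := hmain N
  exact le_trans hn0 (hN n hn)
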